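/- Let (Q,*) be a quasigroup and N, K natural numbers. Let L = (l_0, …, l_{K-1}), L' = (l'_0, …, l'_{K-1}) ∈ Q^K be two (possibly different) leader strings and A, A' ∈ Q^N two inputs, with intermediate strings D^(m) = (e_{l_{m-1}} ∘ ⋯ ∘ e_{l_0})(A) and D'^(m) = (e_{l'_{m-1}} ∘ ⋯ ∘ e_{l'_0})(A') for 0 ≤ m ≤ K (so D^(0) = A and D^(K) = E_{L,K}(A)). If D^(K) = D'^(K), then for every j with 0 ≤ j ≤ K and every index i with j ≤ i ≤ N-1, the i-th coordinate of D^(K-j) equals the i-th coordinate of D'^(K-j); that is, the final output alone determines, for each intermediate row counted j steps from the bottom, all of its coordinates with index at least j, independently of the leaders. -/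

import Mathlib

/-- The quasigroup `e`-transformation of a string `A ∈ Q^N` with leader `l`:
`b 0 = l * a 0` and `b i = b (i-1) * a i`, i.e. `b i` is the left fold of
`mul` over `a 0, …, a i` starting from `l`. -/
def eTr {Q : Type*} (mul : Q → Q → Q) (l : Q) {N : ℕ} (A : Fin N → Q)
    (i : Fin N) : Q :=
  ((List.ofFn A).take ((i : ℕ) + 1)).foldl mul l

/-- The `E`-transformation determined by a list of leaders: apply the
`e`-transformations with the successive leaders, first leader first. -/
def eTrL {Q : Type*} (mul : Q → Q → Q) {N : ℕ} (L : List Q)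
    (A : Fin N → Q) : Fin N → Q :=
  L.foldl (fun B l => eTr mul l B) A

lemma eTr_step {Q : Type*} (mul : Q → Q → Q) (l : Q) {N : ℕ} (B : Fin N → Q)
    (i : Fin N) (hi : 0 < (i : ℕ)) :
    eTr mul l B i = mul (eTr mul l B ⟨(i : ℕ) - 1,
      lt_of_le_of_lt (Nat.sub_le _ _) i.2⟩) (B i) := by
  unfold eTr
  have h1 : (i : ℕ) + 1 = ((i : ℕ) - 1 + 1) + 1 := by omega
  rw [h1, List.take_succ]
  have hlen : (i : ℕ) - 1 + 1 < (List.ofFn B).length := by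
    have hL : (List.ofFn B).length = N := List.length_ofFn
    omega
  rw [List.getElem?_eq_getElem hlen, List.foldl_append]
  simp
  congr 1
  exact congrArg B (Fin.ext (by simp; omega))

lemma eTrL_snoc {Q : Type*} (mul : Q → Q → Q) {N : ℕ} (xs : List Q) (y : Q)
    (A : Fin N → Q) : eTrL mul (xs ++ [y]) A = eTr mul y (eTrL mul xs A) := by
  simp [eTrL, List.foldl_append]

/-- For a quasigroup `(Q, *)`, leader strings `L, L' ∈ Q^K` and
inputs `A, A' ∈ Q^N`, with intermediate strings
`D^(m) = (e_{l_{m-1}} ∘ ⋯ ∘ e_{l_0}) A` (so `D^(0) = A`, `D^(K) = E_{L,K} A`),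
if `D^(K) = D'^(K)` then for every `0 ≤ j ≤ K` and every index `j ≤ i ≤ N - 1`,
the `i`-th coordinate of `D^(K-j)` equals the `i`-th coordinate of `D'^(K-j)`:
the final output alone determines, for each intermediate row counted `j` steps
from the bottom, all of its coordinates with index at least `j`,
independently of the leaders. -/
theorem ETr_determines_triangle {Q : Type*} (mul : Q → Q → Q)
    (hleft : ∀ u v : Q, ∃! x, mul u x = v)
    (hright : ∀ u v : Q, ∃! y, mul y u = v)
    (N K : ℕ) (L L' : Fin K → Q) (A A' : Fin N → Q)
    (D : ℕ → Fin N → Q) (D' : ℕ → Fin N → Q)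
    (hD : ∀ m, D m = eTrL mul ((List.ofFn L).take m) A)
    (hD' : ∀ m, D' m = eTrL mul ((List.ofFn L').take m) A')
    (h : D K = D' K) :
    ∀ j ≤ K, ∀ i : Fin N, j ≤ (i : ℕ) → D (K - j) i = D' (K - j) i := by
  -- successor step for D and D'
  have step : ∀ m (hm : m < K), D (m + 1) = eTr mul (L ⟨m, hm⟩) (D m) := by
    intro m hm
    have ht : (List.ofFn L).take (m + 1)
        = (List.ofFn L).take m ++ [L ⟨m, hm⟩] := by
      rw [List.take_succ, List.getElem?_eq_getElem (by simpa using hm)]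
      simp
    rw [hD (m + 1), hD m, ht, eTrL_snoc]
  have step' : ∀ m (hm : m < K), D' (m + 1) = eTr mul (L' ⟨m, hm⟩) (D' m) := by
    intro m hm
    have ht : (List.ofFn L').take (m + 1)
        = (List.ofFn L').take m ++ [L' ⟨m, hm⟩] := by
      rw [List.take_succ, List.getElem?_eq_getElem (by simpa using hm)]
      simp
    rw [hD' (m + 1), hD' m, ht, eTrL_snoc]
  intro j
  induction j with
  | zero => intro _ i _; simp [h]
  | succ j ih =>
    intro hjK i hi
    set m := K - (j + 1) with hm
    have hmK : m < K := by omega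
    have hKj : K - j = m + 1 := by omega
    have hi1 : 0 < (i : ℕ) := by omega
    set i' : Fin N := ⟨(i : ℕ) - 1, lt_of_le_of_lt (Nat.sub_le _ _) i.2⟩ with hi'
    have ihi : D (m + 1) i = D' (m + 1) i := by
      rw [← hKj]; exact ih (by omega) i (by omega)
    have ihi' : D (m + 1) i' = D' (m + 1) i' := by
      rw [← hKj]; exact ih (by omega) i' (by simp [hi']; omega)
    have e1 : mul (D (m + 1) i') (D m i) = D (m + 1) i := by
      rw [step m hmK]; exact (eTr_step mul _ (D m) i hi1).symm
    have e2 : mul (D' (m + 1) i') (D' m i) = D' (m + 1) i := by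
      rw [step' m hmK]; exact (eTr_step mul _ (D' m) i hi1).symm
    obtain ⟨x, _, hx⟩ := hleft (D (m + 1) i') (D (m + 1) i)
    have e2' : mul (D (m + 1) i') (D' m i) = D (m + 1) i := by
      rw [ihi', ihi]; exact e2
    exact (hx _ e1).trans (hx _ e2').symm
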